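/- Let Γ be a uniform ranked poset of rank d and fix an element x of rank d. Then for any two elements a, a′ of the interval Γ_x with rk(a) = rk(a′) = k, there exists an up-down sequence from a to a′ all of whose members (both the rank-k elements and the rank-(k+1) elements) lie in Γ_x. -/

import Mathlib

set_option linter.unusedSectionVars false
set_option linter.unusedVariables false

open scoped Classical

variable {Γ : Type*} [PartialOrder Γ] [OrderBot Γ] [Fintype Γ]

/-- `rk` is a rank function for the finite poset `Γ` (with least element `⊥`):
the bottom has rank `0` and ranks increase by one along covering relations.
Equivalently, all maximal chains in `[⊥, x]` have the same length `rk x`. -/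
def IsRanked (rk : Γ → ℕ) : Prop :=
  rk ⊥ = 0 ∧ ∀ a b : Γ, a ⋖ b → rk b = rk a + 1

/-- `rankSet rk x n` is the set `S_x(n) = {y ≤ x : rk x - rk y = n}`. -/
def rankSet (rk : Γ → ℕ) (x : Γ) (n : ℕ) : Set Γ := {y | y ≤ x ∧ rk y + n = rk x}

/-- `Γ` is uniform: for each `a`, the equivalence relation on `S_a(1)` generated by
`b ∼ c` whenever `S_b(1) ∩ S_c(1) ≠ ∅` has at most one equivalence class. -/
def Uniform (rk : Γ → ℕ) : Prop :=
  ∀ a b c : Γ, b ∈ rankSet rk a 1 → c ∈ rankSet rk a 1 →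
    Relation.EqvGen
      (fun u v => u ∈ rankSet rk a 1 ∧ v ∈ rankSet rk a 1 ∧
        (rankSet rk u 1 ∩ rankSet rk v 1).Nonempty)
      b c

/-- Two rank-`k` elements are related if they have a common upper bound of rank `k+1`
inside `[⊥, x]`. -/
def udRel (rk : Γ → ℕ) (x : Γ) (k : ℕ) (u v : Γ) : Prop :=
  rk u = k ∧ rk v = k ∧ ∃ b, b ≤ x ∧ rk b = k + 1 ∧ u < b ∧ v < b

lemma udRel_symm (rk : Γ → ℕ) (x : Γ) (k : ℕ) : Symmetric (udRel rk x k) := by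
  rintro u v ⟨h1, h2, b, hb1, hb2, hb3, hb4⟩
  exact ⟨h2, h1, b, hb1, hb2, hb4, hb3⟩

lemma rk_lt_of_lt (rk : Γ → ℕ) (hrk : IsRanked rk) {a b : Γ} (hab : a < b) :
    rk a < rk b := by
  revert hab
  refine WellFounded.induction (wellFounded_gt (α := Γ))
    (C := fun a => a < b → rk a < rk b) a ?_
  intro a ih hab
  obtain ⟨c, hac, hcb⟩ := exists_covBy_le_of_lt hab
  have h1 : rk c = rk a + 1 := hrk.2 _ _ hac
  rcases hcb.lt_or_eq with hlt | rfl
  · have := ih c hac.lt hlt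
    omega
  · omega

/-- The key step: if `u, v` of rank `k+1` have a common upper bound of rank `k+2` in
`[⊥, x]`, then any rank-`k` elements below `u` resp. `v` are connected by `udRel`. -/
lemma uniformStep (rk : Γ → ℕ) (hrk : IsRanked rk) (hU : Uniform rk) (x : Γ) {k : ℕ}
    {u v : Γ} (h : udRel rk x (k + 1) u v) :
    ∀ p q : Γ, p < u → rk p = k → q < v → rk q = k →
      Relation.ReflTransGen (udRel rk x k) p q := by
  obtain ⟨hru, hrv, c, hcx, hrc, huc, hvc⟩ := h
  have hu1 : u ∈ rankSet rk c 1 := ⟨huc.le, by omega⟩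
  have hv1 : v ∈ rankSet rk c 1 := ⟨hvc.le, by omega⟩
  have hE := hU c u v hu1 hv1
  have key : ∀ u' v' : Γ,
      Relation.EqvGen
        (fun u v => u ∈ rankSet rk c 1 ∧ v ∈ rankSet rk c 1 ∧
          (rankSet rk u 1 ∩ rankSet rk v 1).Nonempty) u' v' →
      u' = v' ∨ (u' ∈ rankSet rk c 1 ∧ v' ∈ rankSet rk c 1 ∧
        ∀ p q : Γ, p < u' → rk p = k → q < v' → rk q = k →
          Relation.ReflTransGen (udRel rk x k) p q) := by
    intro u' v' h
    induction h with
    | rel a b hab =>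
      right
      obtain ⟨ha1, hb1, w, hwa, hwb⟩ := hab
      have hra : rk a = k + 1 := by have := ha1.2; omega
      have hrb : rk b = k + 1 := by have := hb1.2; omega
      have hrw : rk w = k := by have := hwa.2; omega
      have hwa' : w < a := lt_of_le_of_ne hwa.1 (by rintro rfl; omega)
      have hwb' : w < b := lt_of_le_of_ne hwb.1 (by rintro rfl; omega)
      have hax : a ≤ x := ha1.1.trans hcx
      have hbx : b ≤ x := hb1.1.trans hcx
      refine ⟨ha1, hb1, fun p q hpa hrp hqb hrq => ?_⟩
      exact Relation.ReflTransGen.head ⟨hrp, hrw, a, hax, hra, hpa, hwa'⟩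
        (Relation.ReflTransGen.single ⟨hrw, hrq, b, hbx, hrb, hwb', hqb⟩)
    | refl a => exact Or.inl rfl
    | symm a b hab ih =>
      rcases ih with rfl | ⟨ha1, hb1, hcon⟩
      · exact Or.inl rfl
      · refine Or.inr ⟨hb1, ha1, fun p q hpb hrp hqa hrq => ?_⟩
        exact (@Relation.ReflTransGen.symmetric _ _ ⟨fun a b h => udRel_symm rk x k h⟩).symm _ _ (hcon q p hqa hrq hpb hrp)
    | trans a b c' hab hbc iha ihb =>
      rcases iha with rfl | ⟨ha1, hb1, hcon1⟩
      · exact ihb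
      · rcases ihb with rfl | ⟨hb1', hc1, hcon2⟩
        · exact Or.inr ⟨ha1, hb1, hcon1⟩
        · refine Or.inr ⟨ha1, hc1, fun p q hpa hrp hqc hrq => ?_⟩
          have hrb : rk b = k + 1 := by have := hb1.2; omega
          have hbbot : (⊥ : Γ) < b := by
            rcases eq_or_lt_of_le (bot_le (a := b)) with h | h
            · exfalso; rw [← h] at hrb; rw [hrk.1] at hrb; omega
            · exact h
          obtain ⟨z, _, hzb⟩ := exists_le_covBy_of_lt hbbot
          have hrz : rk z = k := by have := hrk.2 _ _ hzb; omega
          exact Relation.ReflTransGen.trans (hcon1 p z hpa hrp hzb.lt hrz)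
            (hcon2 z q hzb.lt hrz hqc hrq)
  intro p q hpu hrp hqv hrq
  rcases key u v hE with rfl | ⟨_, _, hcon⟩
  · exact Relation.ReflTransGen.single
      ⟨hrp, hrq, u, huc.le.trans hcx, by omega, hpu, hqv⟩
  · exact hcon p q hpu hrp hqv hrq

/-- Descending one level along a `udRel`-chain. -/
lemma levelDown (rk : Γ → ℕ) (hrk : IsRanked rk) (hU : Uniform rk) (x : Γ) {k : ℕ}
    {u v : Γ} (h : Relation.ReflTransGen (udRel rk x (k + 1)) u v)
    (hux : u ≤ x) (hru : rk u = k + 1) :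
    ∀ p q : Γ, p < u → rk p = k → q < v → rk q = k →
      Relation.ReflTransGen (udRel rk x k) p q := by
  induction h with
  | refl =>
    intro p q hp hrp hq hrq
    exact Relation.ReflTransGen.single ⟨hrp, hrq, u, hux, hru, hp, hq⟩
  | @tail m w hab hbc ih =>
    intro p q hp hrp hq hrq
    have hrm : rk m = k + 1 := hbc.1
    have hmbot : (⊥ : Γ) < m := by
      rcases eq_or_lt_of_le (bot_le (a := m)) with h | h
      · exfalso; rw [← h] at hrm; rw [hrk.1] at hrm; omega
      · exact h
    obtain ⟨z, _, hzm⟩ := exists_le_covBy_of_lt hmbot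
    have hrz : rk z = k := by have := hrk.2 _ _ hzm; omega
    exact Relation.ReflTransGen.trans (ih p z hp hrp hzm.lt hrz)
      (uniformStep rk hrk hU x hbc z q hzm.lt hrz hq hrq)

lemma conn_aux (rk : Γ → ℕ) (hrk : IsRanked rk) (hU : Uniform rk)
    (d : ℕ) (hd : ∀ y : Γ, rk y ≤ d) (x : Γ) (hx : rk x = d) :
    ∀ n k (a a' : Γ), d - k = n → a ≤ x → a' ≤ x → rk a = k → rk a' = k →
      Relation.ReflTransGen (udRel rk x k) a a' := by
  intro n
  induction n with
  | zero =>
    intro k a a' hn ha ha' hka hka'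
    have hk : k = d := le_antisymm (hka ▸ hd a) (by omega)
    have hax : a = x := by
      rcases ha.lt_or_eq with h | h
      · exact absurd (rk_lt_of_lt rk hrk h) (by omega)
      · exact h
    have hax' : a' = x := by
      rcases ha'.lt_or_eq with h | h
      · exact absurd (rk_lt_of_lt rk hrk h) (by omega)
      · exact h
    rw [hax, hax']
  | succ n ih =>
    intro k a a' hn ha ha' hka hka'
    have hkd : k < d := by omega
    have hax : a < x := lt_of_le_of_ne ha (by rintro rfl; omega)
    have hax' : a' < x := lt_of_le_of_ne ha' (by rintro rfl; omega)
    obtain ⟨b, hab, hbx⟩ := exists_covBy_le_of_lt hax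
    obtain ⟨b', hab', hbx'⟩ := exists_covBy_le_of_lt hax'
    have hrb : rk b = k + 1 := by rw [hrk.2 _ _ hab, hka]
    have hrb' : rk b' = k + 1 := by rw [hrk.2 _ _ hab', hka']
    have hmain := ih (k + 1) b b' (by omega) hbx hbx' hrb hrb'
    exact levelDown rk hrk hU x hmain hbx hrb a a' hab.lt hka hab'.lt hka'

lemma encode_aux (rk : Γ → ℕ) (x : Γ) (k : ℕ) :
    ∀ a a' : Γ, Relation.ReflTransGen (udRel rk x k) a a' →
      a ≤ x → rk a = k → a' ≤ x → rk a' = k →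
      ∃ (n : ℕ) (aa : Fin (n + 1) → Γ) (bb : Fin n → Γ),
        aa 0 = a ∧ aa (Fin.last n) = a' ∧
        (∀ i, aa i ≤ x ∧ rk (aa i) = k) ∧
        (∀ i : Fin n, bb i ≤ x ∧ rk (bb i) = k + 1 ∧
          aa i.castSucc < bb i ∧ aa i.succ < bb i) := by
  intro a a' h
  induction h using Relation.ReflTransGen.head_induction_on with
  | refl =>
    intro ha hra _ _
    exact ⟨0, fun _ => a', Fin.elim0, rfl, rfl, fun _ => ⟨ha, hra⟩, fun i => i.elim0⟩
  | @head a0 c hab hbc ih =>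
    intro ha hra ha' hra'
    obtain ⟨_, hrc, w, hwx, hrw, haw, hcw⟩ := hab
    obtain ⟨n, aa, bb, h0, hl, hA, hB⟩ := ih (le_trans hcw.le hwx) hrc ha' hra'
    refine ⟨n + 1, Fin.cons a0 aa, Fin.cons w bb, ?_, ?_, ?_, ?_⟩
    · simp
    · rw [← Fin.succ_last, Fin.cons_succ]; exact hl
    · intro i
      refine Fin.cases ?_ ?_ i
      · simpa using ⟨ha, hra⟩
      · intro j; simpa using hA j
    · intro i
      refine Fin.cases ?_ ?_ i
      · refine ⟨by simpa using hwx, by simpa using hrw, ?_, ?_⟩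
        · simpa using haw
        · have : (Fin.cons a0 aa : Fin (n + 2) → Γ) ((0 : Fin (n + 1)).succ) = aa 0 :=
            Fin.cons_succ _ _ _
          rw [this, h0]; exact hcw
      · intro j
        obtain ⟨h1, h2, h3, h4⟩ := hB j
        refine ⟨by simpa using h1, by simpa using h2, ?_, ?_⟩
        · simpa [Fin.cons_succ, ← Fin.succ_castSucc] using h3
        · simpa [Fin.cons_succ] using h4

/-- Lemma 2.3(2).  Let `Γ` be a uniform ranked poset of rank `d` and
fix `x` of rank `d`.  For any `a, a'` in `Γ_x = [⊥, x]` with `rk a = rk a' = k`, there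
is an up-down sequence from `a` to `a'` all of whose members lie in `Γ_x`:
elements `a = a_0, a_1, …, a_n = a'` of rank `k` and elements `b_1, …, b_n` of
rank `k + 1` with `a_{i-1} < b_i` and `a_i < b_i` for all `i`. -/
theorem upDown_in_interval (rk : Γ → ℕ) (hrk : IsRanked rk) (hU : Uniform rk)
    (d : ℕ) (hd : ∀ y : Γ, rk y ≤ d) (x : Γ) (hx : rk x = d)
    (k : ℕ) (a a' : Γ) (ha : a ≤ x) (ha' : a' ≤ x)
    (hka : rk a = k) (hka' : rk a' = k) :
    ∃ (n : ℕ) (aa : Fin (n + 1) → Γ) (bb : Fin n → Γ),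
      aa 0 = a ∧ aa (Fin.last n) = a' ∧
      (∀ i, aa i ≤ x ∧ rk (aa i) = k) ∧
      (∀ i : Fin n, bb i ≤ x ∧ rk (bb i) = k + 1 ∧
        aa i.castSucc < bb i ∧ aa i.succ < bb i) := by
  have h := conn_aux rk hrk hU d hd x hx (d - k) k a a' rfl ha ha' hka hka'
  exact encode_aux rk x k a a' h ha hka ha' hka'
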